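/- If a sensing matrix A satisfies the RIP of order k+b+1 with δ_{k+b+1} < 1/√(k−g+1), where x is k-sparse with support T, |T| = k, and T₀ is a prior support with |T∩T₀| = g < k and |T₀\T| = b, then the OMP algorithm initialized with Λ₀ = T₀ selects only indices in T\T₀ during its first k−g iterations applied to y = Ax, and after k−g iterations exactly recovers x. -/

import Mathlib

open scoped BigOperators

/-- `A` satisfies the restricted isometry property of order `k` with constant `δ`. -/
def RIP {m n : ℕ} (A : Matrix (Fin m) (Fin n) ℝ) (k : ℕ) (δ : ℝ) : Prop :=
  ∀ x : Fin n → ℝ, (∃ S : Finset (Fin n), S.card ≤ k ∧ ∀ i ∉ S, x i = 0) →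
    (1 - δ) * (∑ i, x i ^ 2) ≤ (∑ i, (A.mulVec x) i ^ 2) ∧
    (∑ i, (A.mulVec x) i ^ 2) ≤ (1 + δ) * (∑ i, x i ^ 2)


lemma dotAA {m n : ℕ} (A : Matrix (Fin m) (Fin n) ℝ) (u w : Fin n → ℝ) :
    ∑ l, (A.mulVec u) l * (A.mulVec w) l
      = ∑ i, w i * (∑ l, A l i * (A.mulVec u) l) := by
  have h1 : ∀ l, (A.mulVec u) l * (A.mulVec w) l
      = ∑ i, w i * (A l i * (A.mulVec u) l) := by
    intro l
    have : (A.mulVec w) l = ∑ i, A l i * w i := rfl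
    rw [this, Finset.mul_sum]
    exact Finset.sum_congr rfl fun i _ => by ring
  simp only [h1]
  rw [Finset.sum_comm]
  exact Finset.sum_congr rfl fun i _ => (Finset.mul_sum _ _ _).symm

lemma mulVec_sub' {m n : ℕ} (A : Matrix (Fin m) (Fin n) ℝ) (u w : Fin n → ℝ) :
    A.mulVec (fun i => u i - w i) = fun l => (A.mulVec u) l - (A.mulVec w) l := by
  funext l
  have h : ∀ v : Fin n → ℝ, (A.mulVec v) l = ∑ i, A l i * v i := fun v => rfl
  simp only [h]
  rw [← Finset.sum_sub_distrib]
  exact Finset.sum_congr rfl fun i _ => by ring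

lemma sum_comb_sq {N : ℕ} (u w : Fin N → ℝ) (c d : ℝ) :
    ∑ i, (c * u i + d * w i)^2
      = c^2 * (∑ i, u i ^2) + (2*c*d) * (∑ i, u i * w i) + d^2 * (∑ i, w i ^2) := by
  rw [Finset.mul_sum, Finset.mul_sum, Finset.mul_sum, ← Finset.sum_add_distrib,
    ← Finset.sum_add_distrib]
  exact Finset.sum_congr rfl fun i _ => by ring

lemma mulVec_comb {m n : ℕ} (A : Matrix (Fin m) (Fin n) ℝ) (u w : Fin n → ℝ) (c d : ℝ) :
    A.mulVec (fun i => c * u i + d * w i) = fun l => c * (A.mulVec u) l + d * (A.mulVec w) l := by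
  funext l
  have : ∀ v : Fin n → ℝ, (A.mulVec v) l = ∑ i, A l i * v i := fun v => rfl
  simp only [this, Finset.mul_sum]
  rw [← Finset.sum_add_distrib]
  exact Finset.sum_congr rfl fun i _ => by ring

lemma sum_sq_nonneg {N : ℕ} (u : Fin N → ℝ) : 0 ≤ ∑ i, u i ^ 2 :=
  Finset.sum_nonneg fun i _ => sq_nonneg _

lemma eq_zero_of_sum_sq {N : ℕ} (u : Fin N → ℝ) (h : ∑ i, u i ^ 2 = 0) : ∀ i, u i = 0 := by
  intro i
  have := (Finset.sum_eq_zero_iff_of_nonneg (fun i _ => sq_nonneg (u i))).mp h i (Finset.mem_univ i)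
  exact pow_eq_zero_iff two_ne_zero |>.mp this

lemma polar {m n K : ℕ} (A : Matrix (Fin m) (Fin n) ℝ) (δ : ℝ) (hRIP : RIP A K δ)
    (S : Finset (Fin n)) (hS : S.card ≤ K) (u w : Fin n → ℝ)
    (hu : ∀ i ∉ S, u i = 0) (hw : ∀ i ∉ S, w i = 0) :
    (∑ i, u i * w i) - (∑ l, (A.mulVec u) l * (A.mulVec w) l)
      ≤ δ * Real.sqrt (∑ i, u i ^ 2) * Real.sqrt (∑ i, w i ^ 2) := by
  set U := ∑ i, u i ^ 2 with hUdef
  set W := ∑ i, w i ^ 2 with hWdef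
  rcases eq_or_lt_of_le (sum_sq_nonneg u) with hU0 | hUpos
  · have hz := eq_zero_of_sum_sq u hU0.symm
    have hue : u = fun _ => (0:ℝ) := funext hz
    have hA : A.mulVec u = fun _ => (0:ℝ) := by
      rw [hue]; funext l
      have : (A.mulVec (fun _ => (0:ℝ))) l = ∑ i, A l i * 0 := rfl
      simp [this]
    rw [hUdef, ← hU0, Real.sqrt_zero]
    have e1 : (∑ i, u i * w i) = 0 := Finset.sum_eq_zero fun i _ => by rw [hz i, zero_mul]
    have e2 : (∑ l, (A.mulVec u) l * (A.mulVec w) l) = 0 :=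
      Finset.sum_eq_zero fun l _ => by rw [hA]; simp
    rw [e1, e2]; simp
  rcases eq_or_lt_of_le (sum_sq_nonneg w) with hW0 | hWpos
  · have hz := eq_zero_of_sum_sq w hW0.symm
    have hA : A.mulVec w = fun _ => (0:ℝ) := by
      rw [funext hz]; funext l
      have : (A.mulVec (fun _ => (0:ℝ))) l = ∑ i, A l i * 0 := rfl
      simp [this]
    rw [hWdef, ← hW0, Real.sqrt_zero]
    have e1 : (∑ i, u i * w i) = 0 := Finset.sum_eq_zero fun i _ => by rw [hz i, mul_zero]
    have e2 : (∑ l, (A.mulVec u) l * (A.mulVec w) l) = 0 :=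
      Finset.sum_eq_zero fun l _ => by rw [hA]; simp
    rw [e1, e2]; simp
  set a := Real.sqrt U with hadef
  set bb := Real.sqrt W with hbdef
  have ha2 : a ^ 2 = U := Real.sq_sqrt (le_of_lt hUpos)
  have hb2 : bb ^ 2 = W := Real.sq_sqrt (le_of_lt hWpos)
  have hapos : 0 < a := Real.sqrt_pos.mpr hUpos
  have hbpos : 0 < bb := Real.sqrt_pos.mpr hWpos
  -- apply RIP to bb•u + a•w and bb•u - a•w
  have hsupp1 : ∀ i ∉ S, bb * u i + a * w i = 0 := fun i hi => by rw [hu i hi, hw i hi]; ring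
  have hsupp2 : ∀ i ∉ S, bb * u i + (-a) * w i = 0 := fun i hi => by rw [hu i hi, hw i hi]; ring
  have h1 := (hRIP (fun i => bb * u i + a * w i) ⟨S, hS, hsupp1⟩).1
  have h2 := (hRIP (fun i => bb * u i + (-a) * w i) ⟨S, hS, hsupp2⟩).2
  rw [mulVec_comb A u w bb a] at h1
  rw [mulVec_comb A u w bb (-a)] at h2
  rw [sum_comb_sq u w bb a] at h1
  rw [sum_comb_sq u w bb (-a)] at h2
  rw [sum_comb_sq (A.mulVec u) (A.mulVec w) bb a] at h1
  rw [sum_comb_sq (A.mulVec u) (A.mulVec w) bb (-a)] at h2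
  rw [← hUdef, ← hWdef, ← ha2, ← hb2] at h1 h2
  set P := ∑ i, u i * w i
  set Q := ∑ l, (A.mulVec u) l * (A.mulVec w) l
  set AU := ∑ l, (A.mulVec u) l ^ 2
  set AW := ∑ l, (A.mulVec w) l ^ 2
  -- h1 : (1-δ)*(bb^2*U + 2ab*P + a^2*W) ≤ bb^2*AU + 2ab*Q + a^2*AW
  -- h2 : bb^2*AU - 2ab*Q + a^2*AW ≤ (1+δ)*(bb^2*U - 2ab*P + a^2*W)
  have key : a * bb * (P - Q) ≤ a * bb * (δ * (a * bb)) := by nlinarith [ha2, hb2, h1, h2]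
  have := (mul_le_mul_iff_right₀ (mul_pos hapos hbpos)).mp key
  nlinarith [this]

set_option maxHeartbeats 1000000 in
lemma core {m n k g b : ℕ} (hg : g < k) (A : Matrix (Fin m) (Fin n) ℝ) (δ : ℝ)
    (hRIP : RIP A (k + b + 1) δ) (hδ : δ * Real.sqrt ((k : ℝ) - g + 1) < 1)
    (x : Fin n → ℝ) (T T₀ : Finset (Fin n)) (hT : ∀ i, x i ≠ 0 ↔ i ∈ T)
    (hTcard : T.card = k) (hbcard : (T₀ \ T).card = b)
    (Λ' : Finset (Fin n)) (hΛsub : Λ' ⊆ T ∪ T₀)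
    (hglb : g ≤ (T ∩ Λ').card) (hlt : (T ∩ Λ').card < k)
    (v : Fin n → ℝ) (hvs : ∀ i ∉ T ∪ Λ', v i = 0)
    (hvx : ∀ i ∉ Λ', v i = x i)
    (hortho : ∀ i ∈ Λ', (∑ l, A l i * (A.mulVec v) l) = 0)
    (j0 : Fin n) (hmax : ∀ i, |∑ l, A l i * (A.mulVec v) l| ≤ |∑ l, A l j0 * (A.mulVec v) l|) :
    j0 ∈ T \ Λ' := by
  classical
  -- basic real facts about δ
  have hkg1 : (2:ℝ) ≤ (k:ℝ) - g + 1 := by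
    have : (g:ℝ) + 1 ≤ (k:ℝ) := by exact_mod_cast hg
    linarith
  have hsqnn : 0 ≤ Real.sqrt ((k:ℝ) - g + 1) := Real.sqrt_nonneg _
  have hsqsq : Real.sqrt ((k:ℝ) - g + 1) ^ 2 = (k:ℝ) - g + 1 :=
    Real.sq_sqrt (by linarith)
  have hsq1 : (1:ℝ) < Real.sqrt ((k:ℝ) - g + 1) := by nlinarith
  have hδ1 : δ < 1 := by nlinarith
  -- cardinalities
  have hTT0card : (T ∪ T₀).card = k + b := by
    rw [← Finset.union_sdiff_self_eq_union, Finset.card_union_of_disjoint Finset.disjoint_sdiff,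
      hTcard, hbcard]
  have hTΛsub : T ∪ Λ' ⊆ T ∪ T₀ :=
    Finset.union_subset Finset.subset_union_left hΛsub
  have hTΛcard : (T ∪ Λ').card ≤ k + b :=
    hTT0card ▸ Finset.card_le_card hTΛsub
  -- T \ Λ' is nonempty, with card s ≤ k - g
  have hs_card : (T ∩ Λ').card + (T \ Λ').card = k := by
    rw [Finset.card_inter_add_card_sdiff, hTcard]
  have hs_pos : 0 < (T \ Λ').card := by omega
  have hs_le : (T \ Λ').card + g ≤ k := by omega
  obtain ⟨i0, hi0⟩ := Finset.card_pos.mp hs_pos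
  have hi0T : i0 ∈ T := (Finset.mem_sdiff.mp hi0).1
  have hi0Λ : i0 ∉ Λ' := (Finset.mem_sdiff.mp hi0).2
  have hvi0 : v i0 ≠ 0 := by
    rw [hvx i0 hi0Λ]; exact (hT i0).mpr hi0T
  -- U > 0
  have hUpos : 0 < ∑ i, v i ^ 2 := by
    rcases eq_or_lt_of_le (sum_sq_nonneg v) with h0 | h
    · exact absurd (eq_zero_of_sum_sq v h0.symm i0) hvi0
    · exact h
  -- residual energy identity
  have hQ : ∑ l, (A.mulVec v) l ^ 2
      = ∑ i ∈ T \ Λ', v i * (∑ l, A l i * (A.mulVec v) l) := by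
    have h1 : ∑ l, (A.mulVec v) l ^ 2
        = ∑ i, v i * (∑ l, A l i * (A.mulVec v) l) := by
      simp only [sq]; exact dotAA A v v
    rw [h1]
    refine (Finset.sum_subset (Finset.subset_univ _) ?_).symm
    intro i _ hi
    by_cases hiΛ : i ∈ Λ'
    · rw [hortho i hiΛ, mul_zero]
    · have : i ∉ T := fun hiT => hi (Finset.mem_sdiff.mpr ⟨hiT, hiΛ⟩)
      rw [hvs i (fun hmem => by
        rcases Finset.mem_union.mp hmem with h | h
        · exact this h
        · exact hiΛ h), zero_mul]
  -- lower RIP bound for v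
  have hlow := (hRIP v ⟨T ∪ Λ', by omega, hvs⟩).1
  have hR2pos : 0 < ∑ l, (A.mulVec v) l ^ 2 :=
    lt_of_lt_of_le (by nlinarith) hlow
  -- ℓ¹ bound
  set β := |∑ l, A l j0 * (A.mulVec v) l| with hβdef
  set L := ∑ i ∈ T \ Λ', |v i| with hLdef
  have hLnn : 0 ≤ L := Finset.sum_nonneg fun i _ => abs_nonneg _
  have hl1 : ∑ l, (A.mulVec v) l ^ 2 ≤ L * β := by
    rw [hQ, hLdef, Finset.sum_mul]
    refine Finset.sum_le_sum fun i _ => ?_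
    calc v i * (∑ l, A l i * (A.mulVec v) l)
        ≤ |v i * (∑ l, A l i * (A.mulVec v) l)| := le_abs_self _
      _ = |v i| * |∑ l, A l i * (A.mulVec v) l| := abs_mul _ _
      _ ≤ |v i| * β := mul_le_mul_of_nonneg_left (hmax i) (abs_nonneg _)
  -- suppose j0 ∉ T \ Λ'
  by_contra hj
  have hj0Λ : j0 ∉ Λ' := by
    intro hmem
    have hβ0 : β = 0 := by rw [hβdef, hortho j0 hmem, abs_zero]
    rw [hβ0, mul_zero] at hl1
    linarith
  have hj0T : j0 ∉ T := fun hmem => hj (Finset.mem_sdiff.mpr ⟨hmem, hj0Λ⟩)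
  have hj0TΛ : j0 ∉ T ∪ Λ' := fun hmem => by
    rcases Finset.mem_union.mp hmem with h | h
    · exact hj0T h
    · exact hj0Λ h
  have hvj0 : v j0 = 0 := hvs j0 hj0TΛ
  -- the auxiliary vector w
  set σ : ℝ := if 0 ≤ ∑ l, A l j0 * (A.mulVec v) l then 1 else -1 with hσdef
  have hσc : σ * (∑ l, A l j0 * (A.mulVec v) l) = β := by
    rcases le_or_gt 0 (∑ l, A l j0 * (A.mulVec v) l) with h | h
    · rw [hσdef, if_pos h, one_mul, hβdef, abs_of_nonneg h]
    · rw [hσdef, if_neg (not_le.mpr h), hβdef, abs_of_neg h]; ring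
  have hσsq : σ ^ 2 = 1 := by
    rcases le_or_gt 0 (∑ l, A l j0 * (A.mulVec v) l) with h | h
    · rw [hσdef, if_pos h]; norm_num
    · rw [hσdef, if_neg (not_le.mpr h)]; norm_num
  set w : Fin n → ℝ := fun i => v i - (if i = j0 then L * σ else 0) with hwdef
  have hws : ∀ i ∉ insert j0 (T ∪ Λ'), w i = 0 := by
    intro i hi
    have hij : i ≠ j0 := fun h => hi (h ▸ Finset.mem_insert_self _ _)
    have hiTΛ : i ∉ T ∪ Λ' := fun h => hi (Finset.mem_insert_of_mem h)
    rw [hwdef]; simp only [if_neg hij, hvs i hiTΛ, sub_zero]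
  have hcard_ins : (insert j0 (T ∪ Λ')).card ≤ k + b + 1 :=
    le_trans (Finset.card_insert_le _ _) (by omega)
  -- ⟨v, w⟩ = U
  have hvw : ∑ i, v i * w i = ∑ i, v i ^ 2 := by
    rw [hwdef]
    have : ∀ i, v i * (v i - (if i = j0 then L * σ else 0))
        = v i ^ 2 - (if i = j0 then v i * (L * σ) else 0) := by
      intro i; split_ifs <;> ring
    simp only [this]
    rw [Finset.sum_sub_distrib, Finset.sum_ite_eq' Finset.univ j0
      (fun i => v i * (L * σ))]
    simp [hvj0]
  -- ∑ w² = U + L²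
  have hw2 : ∑ i, w i ^ 2 = (∑ i, v i ^ 2) + L ^ 2 := by
    rw [hwdef]
    have : ∀ i, (v i - (if i = j0 then L * σ else 0)) ^ 2
        = v i ^ 2 - (if i = j0 then 2 * v i * (L * σ) else 0)
          + (if i = j0 then (L * σ) ^ 2 else 0) := by
      intro i; split_ifs <;> ring
    simp only [this]
    rw [Finset.sum_add_distrib, Finset.sum_sub_distrib,
      Finset.sum_ite_eq' Finset.univ j0 (fun i => 2 * v i * (L * σ)),
      Finset.sum_ite_eq' Finset.univ j0 (fun _ => (L * σ) ^ 2)]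
    simp [hvj0, mul_pow, hσsq]
  -- ⟨Av, Aw⟩ ≤ 0
  have hAvw : ∑ l, (A.mulVec v) l * (A.mulVec w) l ≤ 0 := by
    rw [dotAA A v w]
    have : ∀ i, w i * (∑ l, A l i * (A.mulVec v) l)
        = v i * (∑ l, A l i * (A.mulVec v) l)
          - (if i = j0 then (L * σ) * (∑ l, A l i * (A.mulVec v) l) else 0) := by
      intro i; simp only [hwdef]; split_ifs with h <;> ring
    simp only [this]
    rw [Finset.sum_sub_distrib, Finset.sum_ite_eq' Finset.univ j0
      (fun i => (L * σ) * (∑ l, A l i * (A.mulVec v) l))]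
    have hQ' : ∑ i, v i * (∑ l, A l i * (A.mulVec v) l) = ∑ l, (A.mulVec v) l ^ 2 := by
      simp only [sq]; exact (dotAA A v v).symm
    rw [hQ']
    simp only [Finset.mem_univ, if_true]
    have : L * σ * (∑ l, A l j0 * (A.mulVec v) l) = L * β := by
      rw [mul_assoc, hσc]
    rw [this]
    linarith
  -- Cauchy–Schwarz : L² ≤ s·U
  have hCS : L ^ 2 ≤ ((T \ Λ').card : ℝ) * (∑ i, v i ^ 2) := by
    have h1 : L ^ 2 ≤ (∑ i ∈ T \ Λ', |v i| ^ 2) * (∑ i ∈ T \ Λ', (1:ℝ) ^ 2) := by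
      have := Finset.sum_mul_sq_le_sq_mul_sq (T \ Λ') (fun i => |v i|) (fun _ => (1:ℝ))
      simpa [hLdef] using this
    have h2 : (∑ i ∈ T \ Λ', (1:ℝ) ^ 2) = ((T \ Λ').card : ℝ) := by simp
    have h3 : (∑ i ∈ T \ Λ', |v i| ^ 2) ≤ ∑ i, v i ^ 2 := by
      have e : (∑ i ∈ T \ Λ', |v i| ^ 2) = ∑ i ∈ T \ Λ', v i ^ 2 :=
        Finset.sum_congr rfl fun i _ => sq_abs (v i)
      rw [e]
      exact Finset.sum_le_sum_of_subset_of_nonneg (Finset.subset_univ _)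
        (fun i _ _ => sq_nonneg (v i))
    calc L ^ 2 ≤ (∑ i ∈ T \ Λ', |v i| ^ 2) * (∑ i ∈ T \ Λ', (1:ℝ) ^ 2) := h1
      _ = (∑ i ∈ T \ Λ', |v i| ^ 2) * ((T \ Λ').card : ℝ) := by rw [h2]
      _ ≤ (∑ i, v i ^ 2) * ((T \ Λ').card : ℝ) :=
          mul_le_mul_of_nonneg_right h3 (Nat.cast_nonneg _)
      _ = ((T \ Λ').card : ℝ) * (∑ i, v i ^ 2) := mul_comm _ _
  -- apply polarization
  have hpol := polar A δ hRIP (insert j0 (T ∪ Λ')) hcard_ins v w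
    (fun i hi => hvs i (fun h => hi (Finset.mem_insert_of_mem h))) hws
  rw [hvw, hw2] at hpol
  -- final numeric contradiction
  set U := ∑ i, v i ^ 2
  have hfin : U ≤ δ * Real.sqrt U * Real.sqrt (U + L ^ 2) := by linarith
  have hsU : 0 < Real.sqrt U := Real.sqrt_pos.mpr hUpos
  have hsU2 : Real.sqrt U ^ 2 = U := Real.sq_sqrt (le_of_lt hUpos)
  have hUL : Real.sqrt (U + L ^ 2) ≤ Real.sqrt U * Real.sqrt ((k:ℝ) - g + 1) := by
    rw [← Real.sqrt_mul (le_of_lt hUpos)]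
    apply Real.sqrt_le_sqrt
    have hcast : ((T \ Λ').card : ℝ) ≤ (k:ℝ) - g := by
      have : ((T \ Λ').card : ℝ) + (g:ℝ) ≤ (k:ℝ) := by exact_mod_cast hs_le
      linarith
    have hstep : L ^ 2 ≤ ((k:ℝ) - g) * U :=
      le_trans hCS (mul_le_mul_of_nonneg_right hcast (le_of_lt hUpos))
    nlinarith [hstep]
  have hULpos : 0 < Real.sqrt (U + L ^ 2) :=
    Real.sqrt_pos.mpr (by linarith [sq_nonneg L])
  have hδ0 : 0 ≤ δ := by
    by_contra hneg
    push_neg at hneg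
    have : δ * Real.sqrt U * Real.sqrt (U + L ^ 2) < 0 :=
      mul_neg_of_neg_of_pos (mul_neg_of_neg_of_pos hneg hsU) hULpos
    linarith
  have hchain : δ * Real.sqrt U * Real.sqrt (U + L ^ 2)
      ≤ δ * Real.sqrt U * (Real.sqrt U * Real.sqrt ((k:ℝ) - g + 1)) :=
    mul_le_mul_of_nonneg_left hUL (mul_nonneg hδ0 (le_of_lt hsU))
  have hmss : Real.sqrt U * Real.sqrt U = U := Real.mul_self_sqrt (le_of_lt hUpos)
  have heq : δ * Real.sqrt U * (Real.sqrt U * Real.sqrt ((k:ℝ) - g + 1))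
      = δ * Real.sqrt ((k:ℝ) - g + 1) * (Real.sqrt U * Real.sqrt U) := by ring
  have hfin2 : U ≤ δ * Real.sqrt ((k:ℝ) - g + 1) * U := by
    rw [← hmss]; rw [hmss] at heq ⊢
    calc U ≤ δ * Real.sqrt U * Real.sqrt (U + L ^ 2) := hfin
      _ ≤ δ * Real.sqrt U * (Real.sqrt U * Real.sqrt ((k:ℝ) - g + 1)) := hchain
      _ = δ * Real.sqrt ((k:ℝ) - g + 1) * U := by rw [heq]
  have hlt1 : δ * Real.sqrt ((k:ℝ) - g + 1) * U < 1 * U :=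
    mul_lt_mul_of_pos_right hδ hUpos
  linarith

/-- Noiseless exact recovery: if `δ_{k+b+1} < 1/√(k−g+1)` then OMP initialized with
`Λ₀ = T₀` selects only indices of `T \ T₀` during its first `k−g` iterations applied to
`y = Ax`, and after `k−g` iterations exactly recovers `x`.  The iterates are described by
the sequences `Λ` (index sets), `xe` (least–squares coefficient vectors, characterized by
support and normal equations), `r` (residuals) and `j` (selected indices, maximizing the
correlation with the residual). -/
theorem stmt5 (m n k g b : ℕ) (hg : g < k)
    (A : Matrix (Fin m) (Fin n) ℝ) (δ : ℝ) (hRIP : RIP A (k + b + 1) δ)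
    (hδ : δ < 1 / Real.sqrt ((k : ℝ) - g + 1))
    (x : Fin n → ℝ) (T T₀ : Finset (Fin n))
    (hT : ∀ i, x i ≠ 0 ↔ i ∈ T) (hTcard : T.card = k)
    (hcap : (T ∩ T₀).card = g) (hbcard : (T₀ \ T).card = b)
    (y : Fin m → ℝ) (hy : y = A.mulVec x)
    (Λ : ℕ → Finset (Fin n)) (r : ℕ → Fin m → ℝ) (j : ℕ → Fin n)
    (xe : ℕ → Fin n → ℝ)
    (hΛ0 : Λ 0 = T₀)
    (hxe : ∀ t, (∀ i, i ∉ Λ t → xe t i = 0) ∧ r t = y - A.mulVec (xe t) ∧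
      (∀ i ∈ Λ t, (∑ l, A l i * r t l) = 0))
    (hj : ∀ t, 1 ≤ t → ∀ i, |∑ l, A l i * r (t - 1) l| ≤ |∑ l, A l (j t) * r (t - 1) l|)
    (hΛ : ∀ t, 1 ≤ t → Λ t = Λ (t - 1) ∪ {j t}) :
    (∀ t, 1 ≤ t → t ≤ k - g → j t ∈ T \ T₀) ∧ xe (k - g) = x := by
  classical
  -- numeric preliminaries
  have hkg1 : (2:ℝ) ≤ (k:ℝ) - g + 1 := by
    have : (g:ℝ) + 1 ≤ (k:ℝ) := by exact_mod_cast hg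
    linarith
  have hXpos : 0 < Real.sqrt ((k:ℝ) - g + 1) := Real.sqrt_pos.mpr (by linarith)
  have hδ' : δ * Real.sqrt ((k:ℝ) - g + 1) < 1 := (lt_div_iff₀ hXpos).mp hδ
  have hsqsq : Real.sqrt ((k:ℝ) - g + 1) ^ 2 = (k:ℝ) - g + 1 :=
    Real.sq_sqrt (by linarith)
  have hsq1 : (1:ℝ) < Real.sqrt ((k:ℝ) - g + 1) := by
    nlinarith [Real.sqrt_nonneg ((k:ℝ) - g + 1)]
  have hδ1 : δ < 1 := by nlinarith
  -- residual expressed through v t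
  have hr : ∀ t, r t = A.mulVec (fun i => x i - xe t i) := by
    intro t
    rw [(hxe t).2.1, hy, mulVec_sub' A x (xe t)]
    rfl
  -- the key step
  have step : ∀ t, T₀ ⊆ Λ t → Λ t ⊆ T ∪ T₀ → g ≤ (T ∩ Λ t).card → (T ∩ Λ t).card < k →
      j (t+1) ∈ T \ Λ t := by
    intro t h0 h1 hge hlt
    have hvs : ∀ i ∉ T ∪ Λ t, x i - xe t i = 0 := by
      intro i hi
      have hiT : i ∉ T := fun h => hi (Finset.mem_union_left _ h)
      have hiΛ : i ∉ Λ t := fun h => hi (Finset.mem_union_right _ h)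
      have hx0 : x i = 0 := by
        by_contra h; exact hiT ((hT i).mp h)
      rw [hx0, (hxe t).1 i hiΛ, sub_zero]
    have hvx : ∀ i ∉ Λ t, x i - xe t i = x i := by
      intro i hi; rw [(hxe t).1 i hi, sub_zero]
    have hortho : ∀ i ∈ Λ t, (∑ l, A l i * (A.mulVec (fun i => x i - xe t i)) l) = 0 := by
      intro i hi
      have := (hxe t).2.2 i hi
      rwa [hr t] at this
    have hmax : ∀ i, |∑ l, A l i * (A.mulVec (fun i => x i - xe t i)) l|
        ≤ |∑ l, A l (j (t+1)) * (A.mulVec (fun i => x i - xe t i)) l| := by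
      have := hj (t+1) (by omega)
      simp only [Nat.add_sub_cancel] at this
      rwa [hr t] at this
    exact core hg A δ hRIP hδ' x T T₀ hT hTcard hbcard (Λ t) h1 hge hlt
      (fun i => x i - xe t i) hvs hvx hortho (j (t+1)) hmax
  -- the invariant
  have inv : ∀ t, t ≤ k - g → T₀ ⊆ Λ t ∧ Λ t ⊆ T ∪ T₀ ∧ (T ∩ Λ t).card = g + t := by
    intro t
    induction t with
    | zero =>
      intro _
      rw [hΛ0]
      exact ⟨subset_rfl, Finset.subset_union_right, by omega⟩
    | succ t ih =>
      intro hle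
      obtain ⟨h0, h1, h2⟩ := ih (by omega)
      have hltk : (T ∩ Λ t).card < k := by omega
      have hjmem := step t h0 h1 (by omega) hltk
      obtain ⟨hjT, hjΛ⟩ := Finset.mem_sdiff.mp hjmem
      have hΛt1 : Λ (t+1) = Λ t ∪ {j (t+1)} := by
        have := hΛ (t+1) (by omega)
        simpa only [Nat.add_sub_cancel] using this
      have hset : T ∩ (Λ t ∪ {j (t+1)}) = insert (j (t+1)) (T ∩ Λ t) := by
        ext i
        simp only [Finset.mem_inter, Finset.mem_union, Finset.mem_singleton, Finset.mem_insert]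
        constructor
        · rintro ⟨hiT, hiΛ | hieq⟩
          · exact Or.inr ⟨hiT, hiΛ⟩
          · exact Or.inl hieq
        · rintro (hieq | ⟨hiT, hiΛ⟩)
          · exact ⟨hieq ▸ hjT, Or.inr hieq⟩
          · exact ⟨hiT, Or.inl hiΛ⟩
      refine ⟨?_, ?_, ?_⟩
      · rw [hΛt1]; exact h0.trans Finset.subset_union_left
      · rw [hΛt1]
        exact Finset.union_subset h1
          (Finset.singleton_subset_iff.mpr (Finset.mem_union_left _ hjT))
      · rw [hΛt1, hset,
          Finset.card_insert_of_notMem (fun hmem => hjΛ (Finset.mem_inter.mp hmem).2), h2]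
        omega
  constructor
  · -- first conclusion
    intro t h1t hle
    obtain ⟨s, rfl⟩ : ∃ s, t = s + 1 := ⟨t - 1, by omega⟩
    obtain ⟨h0, h1, h2⟩ := inv s (by omega)
    have hjmem := step s h0 h1 (by omega) (by omega)
    obtain ⟨hjT, hjΛ⟩ := Finset.mem_sdiff.mp hjmem
    exact Finset.mem_sdiff.mpr ⟨hjT, fun hmem => hjΛ (h0 hmem)⟩
  · -- exact recovery after k - g steps
    obtain ⟨h0, h1, h2⟩ := inv (k - g) le_rfl
    have hTsub : T ⊆ Λ (k - g) := by
      have hcard : T.card ≤ (T ∩ Λ (k - g)).card := by omega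
      have heq := Finset.eq_of_subset_of_card_le
        (Finset.inter_subset_left : T ∩ Λ (k - g) ⊆ T) hcard
      intro i hi
      have hi' : i ∈ T ∩ Λ (k - g) := by rw [heq]; exact hi
      exact (Finset.mem_inter.mp hi').2
    set v : Fin n → ℝ := fun i => x i - xe (k - g) i with hvdef
    have hvs : ∀ i ∉ Λ (k - g), v i = 0 := by
      intro i hi
      have hiT : i ∉ T := fun h => hi (hTsub h)
      have hx0 : x i = 0 := by by_contra h; exact hiT ((hT i).mp h)
      rw [hvdef]; simp only []
      rw [hx0, (hxe (k - g)).1 i hi, sub_zero]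
    have hortho : ∀ i ∈ Λ (k - g), (∑ l, A l i * (A.mulVec v) l) = 0 := by
      intro i hi
      have := (hxe (k - g)).2.2 i hi
      rwa [hr (k - g)] at this
    have hzero : ∑ l, (A.mulVec v) l ^ 2 = 0 := by
      have h1' : ∑ l, (A.mulVec v) l ^ 2
          = ∑ i, v i * (∑ l, A l i * (A.mulVec v) l) := by
        simp only [sq]; exact dotAA A v v
      rw [h1']
      refine Finset.sum_eq_zero fun i _ => ?_
      by_cases hiΛ : i ∈ Λ (k - g)
      · rw [hortho i hiΛ, mul_zero]
      · rw [hvs i hiΛ, zero_mul]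
    have hTT0card : (T ∪ T₀).card = k + b := by
      rw [← Finset.union_sdiff_self_eq_union, Finset.card_union_of_disjoint Finset.disjoint_sdiff,
        hTcard, hbcard]
    have hvsupp : ∀ i ∉ T ∪ T₀, v i = 0 := fun i hi => hvs i (fun h => hi (h1 h))
    have hlow := (hRIP v ⟨T ∪ T₀, by omega, hvsupp⟩).1
    rw [hzero] at hlow
    have hvz : ∑ i, v i ^ 2 = 0 := by
      have := sum_sq_nonneg v
      nlinarith
    funext i
    have := eq_zero_of_sum_sq v hvz i
    have : x i - xe (k - g) i = 0 := this
    linarith
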